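/- (Entry of the Gr(3,7) twist table: T*(X^{123456}) = Δ₁₆₇Δ₂₃₄Δ₄₅₆Δ₃₅₇.) For all vectors v₁,…,v₇ ∈ ℝ³, set w_i := v_{i+1}×v_{i+2} with indices taken modulo 7 in {1,…,7}, and write Δ_{abc} := det(v_a,v_b,v_c). Then det(w₁×w₂, w₃×w₄, w₅×w₆) = Δ₁₆₇·Δ₂₃₄·Δ₄₅₆·Δ₃₅₇. -/
import Mathlib


/-- Determinant of the 3×3 real matrix with columns `a`, `b`, `c`. -/
noncomputable def det3 (a b c : Fin 3 → ℝ) : ℝ :=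
  (Matrix.of ![a, b, c]).transpose.det

/-- The standard cross product on `ℝ³`. -/
def cross (a b : Fin 3 → ℝ) : Fin 3 → ℝ := crossProduct a b

lemma det3_eq (a b c : Fin 3 → ℝ) :
    det3 a b c = a 0 * (b 1 * c 2 - b 2 * c 1) - b 0 * (a 1 * c 2 - a 2 * c 1)
      + c 0 * (a 1 * b 2 - a 2 * b 1) := by
  simp [det3, Matrix.det_fin_three, Matrix.transpose_apply, Matrix.vecHead, Matrix.vecTail]; ring

lemma my_cross_cross (a b c : Fin 3 → ℝ) :
    cross (cross a b) (cross b c) = fun i => det3 a b c * b i := by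
  funext i
  fin_cases i <;> simp [cross, crossProduct, det3_eq] <;> ring

lemma det3_smul (k l m : ℝ) (a b c : Fin 3 → ℝ) :
    det3 (fun i => k * a i) (fun i => l * b i) (fun i => m * c i)
      = k * l * m * det3 a b c := by
  simp [det3_eq]; ring

/-- Gr(3,7) twist table entry: `T*(X^{123456}) = Δ₁₆₇Δ₂₃₄Δ₄₅₆Δ₃₅₇`. -/
theorem twist_X123456 (v₁ v₂ v₃ v₄ v₅ v₆ v₇ w₁ w₂ w₃ w₄ w₅ w₆ w₇ : Fin 3 → ℝ)
    (hw₁ : w₁ = cross v₂ v₃) (hw₂ : w₂ = cross v₃ v₄) (hw₃ : w₃ = cross v₄ v₅)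
    (hw₄ : w₄ = cross v₅ v₆) (hw₅ : w₅ = cross v₆ v₇) (hw₆ : w₆ = cross v₇ v₁)
    (hw₇ : w₇ = cross v₁ v₂) :
    det3 (cross w₁ w₂) (cross w₃ w₄) (cross w₅ w₆)
      = det3 v₁ v₆ v₇ * det3 v₂ v₃ v₄ * det3 v₄ v₅ v₆ * det3 v₃ v₅ v₇ := by
  subst hw₁ hw₂ hw₃ hw₄ hw₅ hw₆ hw₇
  rw [my_cross_cross, my_cross_cross, my_cross_cross, det3_smul]
  have h167 : det3 v₆ v₇ v₁ = det3 v₁ v₆ v₇ := by simp [det3_eq]; ring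
  rw [h167]; ring
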